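/- The A–A-bimodule tensor product DA ⊗_{A-A} DA is spanned by the elements α* ⊗ β* with (α,β) ∈ B ⊙ B a cyclic pair (t(β)=s(α) and t(α)=s(β)). Moreover: (i) if (α,β) is not neat then α* ⊗ β* = 0, and (ii) if (α,β) ∼ (γ,δ) under the equivalence relation generated by (aα, β) ∼ (α, βa) and (αb, β) ∼ (α, bβ) for arrows a, b (whenever all paths involved lie in B), then α* ⊗ β* = γ* ⊗ δ*. -/

import Mathlib

/-!  Basic combinatorics of a quiver given by source/target maps `s t : A → V`.
A path of positive length is a list of arrows `[a₁, …, aₙ]` written in order of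
traversal (so the written path `aₙ … a₁` of the paper corresponds to the list
`[a₁, …, aₙ]`).  -/

namespace Monomial

variable {V A : Type*}

/-- `l` is a path: consecutive arrows are composable. -/
def IsPath (s t : A → V) (l : List A) : Prop := l.Chain' fun a b => t a = s b

/-- Source of a (nonempty) path. -/
def srcOf (s : A → V) (l : List A) : Option V := l.head?.map s

/-- Target of a (nonempty) path. -/
def tgtOf (t : A → V) (l : List A) : Option V := l.getLast?.map t

/-- `l` is a nontrivial cycle. -/
def IsCycleList (s t : A → V) (l : List A) : Prop :=
  l ≠ [] ∧ IsPath s t l ∧ tgtOf t l = srcOf s l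

/-- `Z` is a minimal set of path relations of length at least two. -/
def MinimalRels (s t : A → V) (Z : Set (List A)) : Prop :=
  ∀ z ∈ Z, IsPath s t z ∧ 2 ≤ z.length ∧ ∀ w ∈ Z, w <:+: z → w = z

/-- `l` belongs to `B`: it is a path containing no subpath from `Z`
(the basis of the monomial algebra, positive length part). -/
def InB (s t : A → V) (Z : Set (List A)) (l : List A) : Prop :=
  IsPath s t l ∧ ∀ z ∈ Z, ¬ z <:+: l

/-- `(a, β)` is a cyclic pair in `Q₁ ⊙ B` (if `β = []` it stands for the
trivial path at `s a = t a`). -/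
def PairOK (s t : A → V) (Z : Set (List A)) (p : A × List A) : Prop :=
  InB s t Z p.2 ∧ IsCycleList s t (p.2 ++ [p.1])

/-- The set `W` of cycles containing precisely one subpath from `Z`,
located at their end (for a written cycle `γ = ξα`, the list is `α ++ ξ`). -/
def InW (s t : A → V) (Z : Set (List A)) (l : List A) : Prop :=
  IsCycleList s t l ∧
    ∃ ξ ∈ Z, (∃ α, l = α ++ ξ) ∧ ∀ z ∈ Z, ∀ p q, l = p ++ z ++ q → z = ξ ∧ q = []

/-- Two cycles are in the same circuit iff they are related by rotation. -/
def RotEquiv (l₁ l₂ : List A) : Prop := ∃ n, l₁.rotate n = l₂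

end Monomial

namespace Monomial

open Classical

variable {V A : Type*}

/-- The basis of the finite-dimensional monomial algebra `A = kQ/⟨Z⟩`:
a basis element is either a vertex (trivial path) or a nonzero path. -/
def PB (s t : A → V) (Z : Set (List A)) : Type _ :=
  V ⊕ {l : List A // l ≠ [] ∧ InB s t Z l}

/-- Source vertex of a basis element. -/
def srcP (s t : A → V) (Z : Set (List A)) : PB s t Z → V
  | .inl u => u
  | .inr l => s (l.1.head l.2.1)

/-- Target vertex of a basis element. -/
def tgtP (s t : A → V) (Z : Set (List A)) : PB s t Z → V
  | .inl u => u
  | .inr l => t (l.1.getLast l.2.1)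

/-- Underlying list of arrows of a basis element. -/
def toListP (s t : A → V) (Z : Set (List A)) : PB s t Z → List A
  | .inl _ => []
  | .inr l => l.1

/-- The product `p·q` of two basis elements of the monomial algebra (`q` is
applied first); `none` means the product is zero in `A`. -/
noncomputable def comp (s t : A → V) (Z : Set (List A)) :
    PB s t Z → PB s t Z → Option (PB s t Z)
  | .inl u, .inl v => if u = v then some (.inl u) else none
  | .inl u, .inr l => if t (l.1.getLast l.2.1) = u then some (.inr l) else none
  | .inr l, .inl v => if s (l.1.head l.2.1) = v then some (.inr l) else none
  | .inr l, .inr m =>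
      if h : InB s t Z (m.1 ++ l.1) then
        some (.inr ⟨m.1 ++ l.1, fun hc => m.2.1 (List.append_eq_nil_iff.mp hc).1, h⟩)
      else none

variable (s t : A → V) (Z : Set (List A)) (k : Type*) [Field k]

/-- Both `A` and its dual bimodule `DA` are modelled on the space of
`k`-valued functions on the basis `PB s t Z` (for `DA`, the coordinates are
taken in the dual basis `B*`). -/
abbrev MSp := PB s t Z → k

/-- The basis element `γ` of `A`, and at the same time the dual basis element
`γ*` of `DA`. -/
noncomputable def db (γ : PB s t Z) : MSp s t Z k := fun x => if x = γ then 1 else 0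

variable [Fintype (PB s t Z)]

/-- Generic linear map on `MSp` determined by a relation: `f ↦ (x ↦ Σ_{R x γ} f γ)`. -/
noncomputable def sumByRel (R : PB s t Z → PB s t Z → Prop) :
    MSp s t Z k →ₗ[k] MSp s t Z k where
  toFun f x := ∑ γ, if R x γ then f γ else 0
  map_add' f g := by
    funext x
    simp only [Pi.add_apply]
    rw [← Finset.sum_add_distrib]
    exact Finset.sum_congr rfl fun γ _ => by split <;> simp
  map_smul' c f := by
    funext x
    simp only [Pi.smul_apply, smul_eq_mul, RingHom.id_apply]
    rw [Finset.mul_sum]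
    exact Finset.sum_congr rfl fun γ _ => by split <;> simp

/-- The two-sided bimodule action `p·f·q` on `DA`: `(p·f·q)(x) = f(q·x·p)`. -/
noncomputable def actLR (p q : PB s t Z) : MSp s t Z k →ₗ[k] MSp s t Z k :=
  sumByRel s t Z k fun x γ =>
    ((comp s t Z x p).bind fun y => comp s t Z q y) = some γ

/-- The left action `f ↦ p·f` on `DA`: `(p·f)(x) = f(x·p)`. -/
noncomputable def actLin (p : PB s t Z) : MSp s t Z k →ₗ[k] MSp s t Z k :=
  sumByRel s t Z k fun x γ => comp s t Z x p = some γ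

/-- The right action `f ↦ f·p` on `DA`: `(f·p)(x) = f(p·x)`. -/
noncomputable def actRlin (p : PB s t Z) : MSp s t Z k →ₗ[k] MSp s t Z k :=
  sumByRel s t Z k fun x γ => comp s t Z p x = some γ

/-- Left multiplication `y ↦ p·y` on `A`. -/
noncomputable def mulLin (p : PB s t Z) : MSp s t Z k →ₗ[k] MSp s t Z k :=
  sumByRel s t Z k fun r q => comp s t Z p q = some r

/-- Right multiplication `y ↦ y·p` on `A`. -/
noncomputable def mulRlin (p : PB s t Z) : MSp s t Z k →ₗ[k] MSp s t Z k :=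
  sumByRel s t Z k fun r q => comp s t Z q p = some r

variable {s t Z}

/-- `(α, β)` is a cyclic pair: `t(β) = s(α)` and `t(α) = s(β)`. -/
def IsCyclicPairPB (α β : PB s t Z) : Prop :=
  tgtP s t Z β = srcP s t Z α ∧ tgtP s t Z α = srcP s t Z β

/-- A cyclic pair `(α, β) ∈ B ⊙ B` is neat if any arrow extending `β` inside
`B` is the corresponding extremal arrow of `α`, and vice versa. -/
def IsNeatPB (α β : PB s t Z) : Prop :=
  (∀ a : A, t a = srcP s t Z β ∧ InB s t Z (a :: toListP s t Z β) →
    (toListP s t Z α).getLast? = some a) ∧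
  (∀ a : A, s a = tgtP s t Z β ∧ InB s t Z (toListP s t Z β ++ [a]) →
    (toListP s t Z α).head? = some a) ∧
  (∀ b : A, t b = srcP s t Z α ∧ InB s t Z (b :: toListP s t Z α) →
    (toListP s t Z β).getLast? = some b) ∧
  (∀ b : A, s b = tgtP s t Z α ∧ InB s t Z (toListP s t Z α ++ [b]) →
    (toListP s t Z β).head? = some b)

/-- The elementary relation on cyclic pairs in `B ⊙ B`:
`(aα, β) ∼ (α, βa)` and `(αb, β) ∼ (α, bβ)`. -/
def ElemRelPB (p q : PB s t Z × PB s t Z) : Prop :=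
  IsCyclicPairPB p.1 p.2 ∧ IsCyclicPairPB q.1 q.2 ∧
    ((∃ a : A, toListP s t Z p.1 = toListP s t Z q.1 ++ [a] ∧
        toListP s t Z q.2 = a :: toListP s t Z p.2) ∨
     (∃ b : A, toListP s t Z p.1 = b :: toListP s t Z q.1 ∧
        toListP s t Z q.2 = toListP s t Z p.2 ++ [b]))

/-- `N` is a neat equivalence class: an equivalence class of cyclic pairs under
the relation generated by the elementary relations, all of whose members are
neat cyclic pairs. -/
def NeatClass (N : Set (PB s t Z × PB s t Z)) : Prop :=
  ∃ p : PB s t Z × PB s t Z, IsCyclicPairPB p.1 p.2 ∧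
    N = {q | Relation.EqvGen ElemRelPB p q} ∧
    ∀ q ∈ N, IsNeatPB q.1 q.2

variable (s t Z)

/-- `ψ_N(γ*) = Σ_{(γ,δ) ∈ N} δ`, the value of `ψ_N` on a dual basis vector. -/
noncomputable def psiTarget (N : Set (PB s t Z × PB s t Z)) (γ : PB s t Z) :
    MSp s t Z k :=
  fun δ => if (γ, δ) ∈ N then 1 else 0

/-- The linear map `ψ_N : DA → A`. -/
noncomputable def psiLin (N : Set (PB s t Z × PB s t Z)) :
    MSp s t Z k →ₗ[k] MSp s t Z k :=
  sumByRel s t Z k fun δ γ => (γ, δ) ∈ N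

/-- `φ : DA → A` is a morphism of `A–A`-bimodules. -/
def IsBimodMap (φ : MSp s t Z k →ₗ[k] MSp s t Z k) : Prop :=
  ∀ p : PB s t Z,
    φ ∘ₗ actLin s t Z k p = mulLin s t Z k p ∘ₗ φ ∧
    φ ∘ₗ actRlin s t Z k p = mulRlin s t Z k p ∘ₗ φ

/-- The space `Hom_{A-A}(DA, A)` of bimodule morphisms. -/
noncomputable def BimodHoms :
    Submodule k (MSp s t Z k →ₗ[k] MSp s t Z k) where
  carrier := {φ | IsBimodMap s t Z k φ}
  zero_mem' := by
    intro p
    constructor <;> simp [LinearMap.zero_comp, LinearMap.comp_zero]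
  add_mem' := by
    intro a b ha hb p
    exact ⟨by rw [LinearMap.add_comp, LinearMap.comp_add, (ha p).1, (hb p).1],
      by rw [LinearMap.add_comp, LinearMap.comp_add, (ha p).2, (hb p).2]⟩
  smul_mem' := by
    intro c x hx p
    exact ⟨by rw [LinearMap.smul_comp, LinearMap.comp_smul, (hx p).1],
      by rw [LinearMap.smul_comp, LinearMap.comp_smul, (hx p).2]⟩

/-- The space `Alt(DA) = {φ ∈ Hom_{A-A}(DA, A) : φ + φ* = 0}`, where `φ*` is
the transpose of `φ` (in the bases `B*` and `B`): the condition `φ + φ* = 0`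
reads `φ(γ*)_δ + φ(δ*)_γ = 0` for all `γ, δ ∈ B`. -/
noncomputable def AltHoms :
    Submodule k (MSp s t Z k →ₗ[k] MSp s t Z k) where
  carrier := {φ | IsBimodMap s t Z k φ ∧
    ∀ γ δ : PB s t Z, φ (db s t Z k γ) δ + φ (db s t Z k δ) γ = 0}
  zero_mem' := by
    refine ⟨fun p => ?_, fun γ δ => by simp⟩
    constructor <;> simp [LinearMap.zero_comp, LinearMap.comp_zero]
  add_mem' := by
    intro a b ha hb
    refine ⟨fun p => ⟨?_, ?_⟩, fun γ δ => ?_⟩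
    · rw [LinearMap.add_comp, LinearMap.comp_add, (ha.1 p).1, (hb.1 p).1]
    · rw [LinearMap.add_comp, LinearMap.comp_add, (ha.1 p).2, (hb.1 p).2]
    · have h1 := ha.2 γ δ
      have h2 := hb.2 γ δ
      simp only [LinearMap.add_apply, Pi.add_apply]
      linear_combination h1 + h2
  smul_mem' := by
    intro c x hx
    refine ⟨fun p => ⟨?_, ?_⟩, fun γ δ => ?_⟩
    · rw [LinearMap.smul_comp, LinearMap.comp_smul, (hx.1 p).1]
    · rw [LinearMap.smul_comp, LinearMap.comp_smul, (hx.1 p).2]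
    · have h := hx.2 γ δ
      simp only [LinearMap.smul_apply, Pi.smul_apply, smul_eq_mul]
      linear_combination c * h

end Monomial

namespace Monomial

open Classical

variable {V A : Type*} {s t : A → V} {Z : Set (List A)}

lemma toListP_inl (u : V) : toListP s t Z (.inl u) = [] := rfl

lemma toListP_inr (l) : toListP s t Z (.inr l) = l.1 := rfl

lemma srcP_inl (u : V) : srcP s t Z (.inl u) = u := rfl
lemma tgtP_inl (u : V) : tgtP s t Z (.inl u) = u := rfl
lemma srcP_inr (l) : srcP s t Z (.inr l) = s (l.1.head l.2.1) := rfl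
lemma tgtP_inr (l) : tgtP s t Z (.inr l) = t (l.1.getLast l.2.1) := rfl

lemma inB_single (hZ : MinimalRels s t Z) (a : A) :
    ([a] : List A) ≠ [] ∧ InB s t Z [a] := by
  refine ⟨by simp, List.isChain_singleton _, fun z hz hinf => ?_⟩
  have h2 := (hZ z hz).2.1
  have hle := hinf.length_le
  simp at hle
  omega

lemma some_inl_eq (v : V) (γ : PB s t Z) :
    (@Eq (Option (PB s t Z)) (@some (PB s t Z) (Sum.inl v)) (some γ)) = (Sum.inl v = γ) :=
  Option.some.injEq _ _

lemma some_inr_eq (l : {l : List A // l ≠ [] ∧ InB s t Z l}) (γ : PB s t Z) :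
    (@Eq (Option (PB s t Z)) (@some (PB s t Z) (Sum.inr l)) (some γ)) = (Sum.inr l = γ) :=
  Option.some.injEq _ _

lemma some_inr_inr_eq (l l' : {l : List A // l ≠ [] ∧ InB s t Z l}) :
    (@Eq (Option (PB s t Z)) (@some (PB s t Z) (Sum.inr l)) (@some (PB s t Z) (Sum.inr l'))) =
      (@Eq (PB s t Z) (Sum.inr l) (Sum.inr l')) :=
  Option.some.injEq _ _

lemma ite_eq_some_inr {p : Prop} {_ : Decidable p} (b : Option (PB s t Z))
    (l : {l : List A // l ≠ [] ∧ InB s t Z l}) :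
    ((if p then b else none) = @some (PB s t Z) (Sum.inr l)) ↔
      p ∧ b = @some (PB s t Z) (Sum.inr l) :=
  Option.ite_none_right_eq_some

lemma dite_eq_some_inr {p : Prop} {_ : Decidable p} (b : p → Option (PB s t Z))
    (l : {l : List A // l ≠ [] ∧ InB s t Z l}) :
    ((if h : p then b h else none) = @some (PB s t Z) (Sum.inr l)) ↔
      ∃ h, b h = @some (PB s t Z) (Sum.inr l) :=
  Option.dite_none_right_eq_some

lemma comp_vertex_left {u : V} {γ : PB s t Z} (h : srcP s t Z γ = u) (x : PB s t Z) :
    comp s t Z x (.inl u) = some γ ↔ x = γ := by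
  cases x with
  | inl v =>
    simp only [comp, Option.ite_none_right_eq_some, Option.some.injEq, some_inl_eq, some_inr_eq, some_inr_inr_eq,
      ite_eq_some_inr, dite_eq_some_inr]
    constructor
    · rintro ⟨rfl, rfl⟩; rfl
    · rintro rfl; exact ⟨h, rfl⟩
  | inr l =>
    simp only [comp, Option.ite_none_right_eq_some, Option.some.injEq, some_inl_eq, some_inr_eq, some_inr_inr_eq,
      ite_eq_some_inr, dite_eq_some_inr]
    constructor
    · rintro ⟨_, rfl⟩; rfl
    · rintro rfl; exact ⟨h, rfl⟩

lemma comp_vertex_left_ne {u : V} {γ : PB s t Z} (h : srcP s t Z γ ≠ u) (x : PB s t Z) :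
    comp s t Z x (.inl u) ≠ some γ := by
  cases x with
  | inl v =>
    simp only [comp, ne_eq, Option.ite_none_right_eq_some, Option.some.injEq, some_inl_eq, some_inr_eq, some_inr_inr_eq,
      ite_eq_some_inr, dite_eq_some_inr, not_and]
    rintro hv rfl; exact h hv
  | inr l =>
    simp only [comp, ne_eq, Option.ite_none_right_eq_some, Option.some.injEq, some_inl_eq, some_inr_eq, some_inr_inr_eq,
      ite_eq_some_inr, dite_eq_some_inr, not_and]
    rintro hv rfl; exact h hv

lemma comp_vertex_right {u : V} {γ : PB s t Z} (h : tgtP s t Z γ = u) (x : PB s t Z) :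
    comp s t Z (.inl u) x = some γ ↔ x = γ := by
  cases x with
  | inl v =>
    simp only [comp, Option.ite_none_right_eq_some, Option.some.injEq, some_inl_eq, some_inr_eq, some_inr_inr_eq,
      ite_eq_some_inr, dite_eq_some_inr]
    constructor
    · rintro ⟨rfl, rfl⟩; rfl
    · rintro rfl
      have hvu : v = u := h
      subst hvu
      exact ⟨rfl, rfl⟩
  | inr l =>
    simp only [comp, Option.ite_none_right_eq_some, Option.some.injEq, some_inl_eq, some_inr_eq, some_inr_inr_eq,
      ite_eq_some_inr, dite_eq_some_inr]
    constructor
    · rintro ⟨_, rfl⟩; rfl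
    · rintro rfl; exact ⟨h, rfl⟩

lemma comp_vertex_right_ne {u : V} {γ : PB s t Z} (h : tgtP s t Z γ ≠ u) (x : PB s t Z) :
    comp s t Z (.inl u) x ≠ some γ := by
  cases x with
  | inl v =>
    simp only [comp, ne_eq, Option.ite_none_right_eq_some, Option.some.injEq, some_inl_eq, some_inr_eq, some_inr_inr_eq,
      ite_eq_some_inr, dite_eq_some_inr, not_and]
    rintro rfl rfl; exact h rfl
  | inr l =>
    simp only [comp, ne_eq, Option.ite_none_right_eq_some, Option.some.injEq, some_inl_eq, some_inr_eq, some_inr_inr_eq,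
      ite_eq_some_inr, dite_eq_some_inr, not_and]
    rintro hv rfl; exact h hv

lemma inrPB_inj {l l' : {l : List A // l ≠ [] ∧ InB s t Z l}}
    (h : (Sum.inr l : PB s t Z) = Sum.inr l') : l.1 = l'.1 :=
  congrArg Subtype.val (Sum.inr.inj h)

lemma inrPB_ext {l l' : {l : List A // l ≠ [] ∧ InB s t Z l}}
    (h : l.1 = l'.1) : (Sum.inr l : PB s t Z) = Sum.inr l' :=
  congrArg Sum.inr (Subtype.ext h)

lemma arr_char_left (a : A) (ha : ([a] : List A) ≠ [] ∧ InB s t Z [a])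
    {m : List A} (hm : a :: m ≠ [] ∧ InB s t Z (a :: m)) (x₀ : PB s t Z)
    (h₀ : toListP s t Z x₀ = m) (hv : ∀ u, x₀ = .inl u → u = t a) (x : PB s t Z) :
    comp s t Z x (.inr ⟨[a], ha⟩) = some (.inr ⟨a :: m, hm⟩) ↔ x = x₀ := by
  cases x with
  | inl v =>
    simp only [comp, Option.ite_none_right_eq_some,
      Option.some.injEq, some_inl_eq, some_inr_eq, some_inr_inr_eq,
      ite_eq_some_inr, dite_eq_some_inr]
    constructor
    · rintro ⟨rfl, hEq⟩
      have hnil : ([] : List A) = m := (List.cons.inj (inrPB_inj hEq)).2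
      cases x₀ with
      | inl u => rw [hv u rfl]; rfl
      | inr l =>
        have h0 : l.1 = m := h₀
        exact absurd (h0.trans hnil.symm) l.2.1
    · rintro rfl
      refine ⟨(hv v rfl).symm, inrPB_ext ?_⟩
      have h0 : ([] : List A) = m := h₀
      show ([a] : List A) = a :: m
      rw [← h0]
  | inr l =>
    simp only [comp, List.singleton_append, Option.dite_none_right_eq_some,
      Option.some.injEq, some_inl_eq, some_inr_eq, some_inr_inr_eq,
      ite_eq_some_inr, dite_eq_some_inr]
    constructor
    · rintro ⟨_, hEq⟩
      have hl : l.1 = m := (List.cons.inj (inrPB_inj hEq)).2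
      cases x₀ with
      | inl u =>
        have h0 : ([] : List A) = m := h₀
        exact absurd (hl.trans h0.symm) l.2.1
      | inr l' =>
        have h0 : l'.1 = m := h₀
        exact inrPB_ext (hl.trans h0.symm)
    · rintro rfl
      have h0 : l.1 = m := h₀
      exact ⟨h0 ▸ hm.2, inrPB_ext (show a :: l.1 = a :: m by rw [h0])⟩

lemma arr_char_right (a : A) (ha : ([a] : List A) ≠ [] ∧ InB s t Z [a])
    {m : List A} (hm : m ++ [a] ≠ [] ∧ InB s t Z (m ++ [a])) (x₀ : PB s t Z)
    (h₀ : toListP s t Z x₀ = m) (hv : ∀ u, x₀ = .inl u → u = s a) (x : PB s t Z) :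
    comp s t Z (.inr ⟨[a], ha⟩) x = some (.inr ⟨m ++ [a], hm⟩) ↔ x = x₀ := by
  cases x with
  | inl v =>
    simp only [comp, Option.ite_none_right_eq_some, Option.some.injEq, some_inl_eq, some_inr_eq, some_inr_inr_eq,
      ite_eq_some_inr, dite_eq_some_inr]
    constructor
    · rintro ⟨rfl, hEq⟩
      have hnil : ([a] : List A) = m ++ [a] := inrPB_inj hEq
      have hm0 : m = [] := by
        have h' := congrArg List.length hnil
        simp at h'
        exact h'
      cases x₀ with
      | inl u => rw [hv u rfl]; rfl
      | inr l =>
        have h0 : l.1 = m := h₀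
        exact absurd (h0.trans hm0) l.2.1
    · rintro rfl
      have hm0 : m = [] := (show ([] : List A) = m from h₀).symm
      subst hm0
      exact ⟨(hv v rfl).symm, rfl⟩
  | inr l =>
    simp only [comp, Option.dite_none_right_eq_some, Option.some.injEq, some_inl_eq, some_inr_eq, some_inr_inr_eq,
      ite_eq_some_inr, dite_eq_some_inr]
    constructor
    · rintro ⟨_, hEq⟩
      have hl : l.1 = m := by
        have h' : l.1 ++ [a] = m ++ [a] := inrPB_inj hEq
        simpa using h'
      cases x₀ with
      | inl u =>
        have h0 : ([] : List A) = m := h₀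
        exact absurd (hl.trans h0.symm) l.2.1
      | inr l' =>
        have h0 : l'.1 = m := h₀
        exact inrPB_ext (hl.trans h0.symm)
    · rintro rfl
      have h0 : l.1 = m := h₀
      exact ⟨h0 ▸ hm.2, inrPB_ext (show l.1 ++ [a] = m ++ [a] by rw [h0])⟩

lemma arr_left_zero (a : A) (ha : ([a] : List A) ≠ [] ∧ InB s t Z [a])
    {γ : PB s t Z} (hγ : (toListP s t Z γ).head? ≠ some a) (x : PB s t Z) :
    comp s t Z x (.inr ⟨[a], ha⟩) ≠ some γ := by
  cases x with
  | inl v =>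
    simp only [comp, ne_eq, Option.ite_none_right_eq_some, Option.some.injEq, some_inl_eq, some_inr_eq, some_inr_inr_eq,
      ite_eq_some_inr, dite_eq_some_inr, not_and]
    rintro _ rfl
    exact hγ rfl
  | inr l =>
    simp only [comp, List.singleton_append, ne_eq, Option.dite_none_right_eq_some,
      Option.some.injEq, some_inl_eq, some_inr_eq, some_inr_inr_eq,
      ite_eq_some_inr, dite_eq_some_inr, not_exists]
    rintro _ rfl
    exact hγ rfl

lemma arr_right_zero (a : A) (ha : ([a] : List A) ≠ [] ∧ InB s t Z [a])
    {γ : PB s t Z} (hγ : (toListP s t Z γ).getLast? ≠ some a) (x : PB s t Z) :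
    comp s t Z (.inr ⟨[a], ha⟩) x ≠ some γ := by
  cases x with
  | inl v =>
    simp only [comp, ne_eq, Option.ite_none_right_eq_some,
      Option.some.injEq, some_inl_eq, some_inr_eq, some_inr_inr_eq,
      ite_eq_some_inr, dite_eq_some_inr, not_and]
    rintro _ rfl
    exact hγ rfl
  | inr l =>
    simp only [comp, ne_eq, Option.dite_none_right_eq_some, Option.some.injEq, some_inl_eq, some_inr_eq, some_inr_inr_eq,
      ite_eq_some_inr, dite_eq_some_inr, not_exists]
    rintro _ rfl
    apply hγ
    show (l.1 ++ [a]).getLast? = some a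
    simp

section LinAlg

variable (k : Type*) [Field k] [Fintype (PB s t Z)]

lemma sumByRel_db (R : PB s t Z → PB s t Z → Prop) (γ : PB s t Z) :
    sumByRel s t Z k R (db s t Z k γ) = fun x => if R x γ then 1 else 0 := by
  funext x
  show (∑ γ', if R x γ' then db s t Z k γ γ' else 0) = _
  have h1 : ∀ γ' : PB s t Z,
      (if R x γ' then db s t Z k γ γ' else 0) =
        (if γ' = γ then (if R x γ' then (1 : k) else 0) else 0) := by
    intro γ'
    simp only [db]
    split_ifs <;> simp_all
  rw [Finset.sum_congr rfl fun γ' _ => h1 γ']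
  rw [Finset.sum_ite_eq' Finset.univ γ (fun γ' => if R x γ' then (1 : k) else 0)]
  simp

lemma sumByRel_db_unique {R : PB s t Z → PB s t Z → Prop} {γ γ₀ : PB s t Z}
    (h : ∀ x, R x γ ↔ x = γ₀) :
    sumByRel s t Z k R (db s t Z k γ) = db s t Z k γ₀ := by
  rw [sumByRel_db]
  funext x
  simp only [db, h x]

lemma sumByRel_db_zero {R : PB s t Z → PB s t Z → Prop} {γ : PB s t Z}
    (h : ∀ x, ¬ R x γ) :
    sumByRel s t Z k R (db s t Z k γ) = 0 := by
  rw [sumByRel_db]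
  funext x
  simp [h x]

lemma actLin_db_unique {p γ γ₀ : PB s t Z}
    (h : ∀ x, comp s t Z x p = some γ ↔ x = γ₀) :
    actLin s t Z k p (db s t Z k γ) = db s t Z k γ₀ :=
  sumByRel_db_unique k h

lemma actLin_db_zero {p γ : PB s t Z} (h : ∀ x, comp s t Z x p ≠ some γ) :
    actLin s t Z k p (db s t Z k γ) = 0 :=
  sumByRel_db_zero k h

lemma actRlin_db_unique {p γ γ₀ : PB s t Z}
    (h : ∀ x, comp s t Z p x = some γ ↔ x = γ₀) :
    actRlin s t Z k p (db s t Z k γ) = db s t Z k γ₀ :=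
  sumByRel_db_unique k h

lemma actRlin_db_zero {p γ : PB s t Z} (h : ∀ x, comp s t Z p x ≠ some γ) :
    actRlin s t Z k p (db s t Z k γ) = 0 :=
  sumByRel_db_zero k h

lemma expand_db (f : MSp s t Z k) : f = ∑ γ, f γ • db s t Z k γ := by
  funext x
  rw [Finset.sum_apply]
  simp [db]

end LinAlg

end Monomial




open Monomial in
/-- `DA ⊗_{A-A} DA` is spanned by the elements `α* ⊗ β*` with
`(α, β)` a cyclic pair; moreover (i) `α* ⊗ β* = 0` if `(α, β)` is not neat, and
(ii) `α* ⊗ β* = γ* ⊗ δ*` whenever `(α, β) ∼ (γ, δ)`.  By the universal property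
of the tensor product over the enveloping algebra this is expressed through an
arbitrary `A-A`-balanced bilinear map `T` (one satisfying
`T(f·a, g) = T(f, a·g)` and `T(a·f, g) = T(f, g·a)` for all basis elements `a`). -/
theorem tensor_spanning_and_relations {V A k : Type*} [Field k] (s t : A → V)
    (Z : Set (List A)) (hZ : MinimalRels s t Z) [Fintype (PB s t Z)]
    (M : Type*) [AddCommGroup M] [Module k M]
    (T : MSp s t Z k →ₗ[k] MSp s t Z k →ₗ[k] M)
    (hbal₁ : ∀ (p : PB s t Z) (f g : MSp s t Z k),
      T (actRlin s t Z k p f) g = T f (actLin s t Z k p g))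
    (hbal₂ : ∀ (p : PB s t Z) (f g : MSp s t Z k),
      T (actLin s t Z k p f) g = T f (actRlin s t Z k p g)) :
    ((∀ α β : PB s t Z, IsCyclicPairPB α β →
        T (db s t Z k α) (db s t Z k β) = 0) → T = 0) ∧
    (∀ α β : PB s t Z, IsCyclicPairPB α β → ¬ IsNeatPB α β →
      T (db s t Z k α) (db s t Z k β) = 0) ∧
    (∀ p q : PB s t Z × PB s t Z, Relation.EqvGen ElemRelPB p q →
      T (db s t Z k p.1) (db s t Z k p.2) = T (db s t Z k q.1) (db s t Z k q.2)) := by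
  
  classical
  -- non-cyclic pairs vanish automatically
  have key0 : ∀ α β : PB s t Z, ¬ IsCyclicPairPB α β →
      T (db s t Z k α) (db s t Z k β) = 0 := by
    intro α β hc
    rw [IsCyclicPairPB, not_and_or] at hc
    rcases hc with h | h
    · have e1 : actLin s t Z k (.inl (srcP s t Z α)) (db s t Z k α) = db s t Z k α :=
        actLin_db_unique k (comp_vertex_left rfl)
      have e2 : actRlin s t Z k (.inl (srcP s t Z α)) (db s t Z k β) = 0 :=
        actRlin_db_zero k (comp_vertex_right_ne h)
      have hb := hbal₂ (.inl (srcP s t Z α)) (db s t Z k α) (db s t Z k β)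
      rw [e1, e2] at hb
      simpa using hb
    · have e1 : actRlin s t Z k (.inl (tgtP s t Z α)) (db s t Z k α) = db s t Z k α :=
        actRlin_db_unique k (comp_vertex_right rfl)
      have e2 : actLin s t Z k (.inl (tgtP s t Z α)) (db s t Z k β) = 0 :=
        actLin_db_zero k (comp_vertex_left_ne (fun hh => h hh.symm))
      have hb := hbal₁ (.inl (tgtP s t Z α)) (db s t Z k α) (db s t Z k β)
      rw [e1, e2] at hb
      simpa using hb
  refine ⟨?_, ?_, ?_⟩
  · -- spanning
    intro h0
    have key : ∀ α β : PB s t Z, T (db s t Z k α) (db s t Z k β) = 0 := by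
      intro α β
      by_cases hc : IsCyclicPairPB α β
      · exact h0 α β hc
      · exact key0 α β hc
    apply LinearMap.ext; intro f; apply LinearMap.ext; intro g
    rw [LinearMap.zero_apply, LinearMap.zero_apply]
    conv_lhs => rw [expand_db k f, expand_db k g]
    rw [map_sum]
    simp only [LinearMap.sum_apply, map_smul, LinearMap.smul_apply, map_sum, key,
      smul_zero, Finset.sum_const_zero]
  · -- non-neat pairs vanish
    intro α β _ hn
    rw [IsNeatPB, not_and_or, not_and_or, not_and_or] at hn
    rcases hn with hA | hB | hC | hD
    · push_neg at hA
      obtain ⟨a, ⟨hta, hBa⟩, hlast⟩ := hA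
      have ha := inB_single hZ a
      have e1 : actLin s t Z k (.inr ⟨[a], ha⟩)
          (db s t Z k (.inr ⟨a :: toListP s t Z β, by simp, hBa⟩)) = db s t Z k β :=
        actLin_db_unique k (arr_char_left a ha ⟨by simp, hBa⟩ β rfl
          (by rintro u rfl; exact hta.symm))
      have e2 : actRlin s t Z k (.inr ⟨[a], ha⟩) (db s t Z k α) = 0 :=
        actRlin_db_zero k (arr_right_zero a ha hlast)
      have hb := hbal₁ (.inr ⟨[a], ha⟩) (db s t Z k α)
        (db s t Z k (.inr ⟨a :: toListP s t Z β, by simp, hBa⟩))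
      rw [e1, e2] at hb
      simpa using hb.symm
    · push_neg at hB
      obtain ⟨a, ⟨hsa, hBa⟩, hhead⟩ := hB
      have ha := inB_single hZ a
      have e1 : actRlin s t Z k (.inr ⟨[a], ha⟩)
          (db s t Z k (.inr ⟨toListP s t Z β ++ [a], by simp, hBa⟩)) = db s t Z k β :=
        actRlin_db_unique k (arr_char_right a ha ⟨by simp, hBa⟩ β rfl
          (by rintro u rfl; exact hsa.symm))
      have e2 : actLin s t Z k (.inr ⟨[a], ha⟩) (db s t Z k α) = 0 :=
        actLin_db_zero k (arr_left_zero a ha hhead)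
      have hb := hbal₂ (.inr ⟨[a], ha⟩) (db s t Z k α)
        (db s t Z k (.inr ⟨toListP s t Z β ++ [a], by simp, hBa⟩))
      rw [e1, e2] at hb
      simpa using hb.symm
    · push_neg at hC
      obtain ⟨b, ⟨htb, hBb⟩, hlast⟩ := hC
      have hb' := inB_single hZ b
      have e1 : actLin s t Z k (.inr ⟨[b], hb'⟩)
          (db s t Z k (.inr ⟨b :: toListP s t Z α, by simp, hBb⟩)) = db s t Z k α :=
        actLin_db_unique k (arr_char_left b hb' ⟨by simp, hBb⟩ α rfl
          (by rintro u rfl; exact htb.symm))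
      have e2 : actRlin s t Z k (.inr ⟨[b], hb'⟩) (db s t Z k β) = 0 :=
        actRlin_db_zero k (arr_right_zero b hb' hlast)
      have hb := hbal₂ (.inr ⟨[b], hb'⟩)
        (db s t Z k (.inr ⟨b :: toListP s t Z α, by simp, hBb⟩)) (db s t Z k β)
      rw [e1, e2] at hb
      simpa using hb
    · push_neg at hD
      obtain ⟨b, ⟨hsb, hBb⟩, hhead⟩ := hD
      have hb' := inB_single hZ b
      have e1 : actRlin s t Z k (.inr ⟨[b], hb'⟩)
          (db s t Z k (.inr ⟨toListP s t Z α ++ [b], by simp, hBb⟩)) = db s t Z k α :=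
        actRlin_db_unique k (arr_char_right b hb' ⟨by simp, hBb⟩ α rfl
          (by rintro u rfl; exact hsb.symm))
      have e2 : actLin s t Z k (.inr ⟨[b], hb'⟩) (db s t Z k β) = 0 :=
        actLin_db_zero k (arr_left_zero b hb' hhead)
      have hb := hbal₁ (.inr ⟨[b], hb'⟩)
        (db s t Z k (.inr ⟨toListP s t Z α ++ [b], by simp, hBb⟩)) (db s t Z k β)
      rw [e1, e2] at hb
      simpa using hb
  · -- equivalence relation
    have step : ∀ p q : PB s t Z × PB s t Z, ElemRelPB p q →
        T (db s t Z k p.1) (db s t Z k p.2) = T (db s t Z k q.1) (db s t Z k q.2) := by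
      rintro ⟨p1, p2⟩ ⟨q1, q2⟩ ⟨hcp, hcq, ⟨a, h1, h2⟩ | ⟨b, h1, h2⟩⟩
      · -- p1 = q1 ++ [a], q2 = a :: p2
        rcases p1 with u | ⟨l1, hl1⟩
        · simp [toListP] at h1
        rcases q2 with u | ⟨l2, hl2⟩
        · simp [toListP] at h2
        simp only [toListP_inr] at h1 h2
        subst h1
        subst h2
        have ha := inB_single hZ a
        have e1 : actRlin s t Z k (.inr ⟨[a], ha⟩)
            (db s t Z k (.inr ⟨toListP s t Z q1 ++ [a], hl1⟩)) = db s t Z k q1 := by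
          refine actRlin_db_unique k (arr_char_right a ha hl1 q1 rfl ?_)
          rintro u rfl
          have h' := hcq.2
          simp only [tgtP_inl, srcP_inr, List.head_cons] at h'
          exact h'
        have e2 : actLin s t Z k (.inr ⟨[a], ha⟩)
            (db s t Z k (.inr ⟨a :: toListP s t Z p2, hl2⟩)) = db s t Z k p2 := by
          refine actLin_db_unique k (arr_char_left a ha hl2 p2 rfl ?_)
          rintro u rfl
          have h' := hcp.2
          simp only [srcP_inl, tgtP_inr, List.getLast_append_singleton] at h'
          exact h'.symm
        have hb := hbal₁ (.inr ⟨[a], ha⟩)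
          (db s t Z k (.inr ⟨toListP s t Z q1 ++ [a], hl1⟩))
          (db s t Z k (.inr ⟨a :: toListP s t Z p2, hl2⟩))
        rw [e1, e2] at hb
        exact hb.symm
      · -- p1 = b :: q1, q2 = p2 ++ [b]
        rcases p1 with u | ⟨l1, hl1⟩
        · simp [toListP] at h1
        rcases q2 with u | ⟨l2, hl2⟩
        · simp [toListP] at h2
        simp only [toListP_inr] at h1 h2
        subst h1
        subst h2
        have hbv := inB_single hZ b
        have e1 : actLin s t Z k (.inr ⟨[b], hbv⟩)
            (db s t Z k (.inr ⟨b :: toListP s t Z q1, hl1⟩)) = db s t Z k q1 := by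
          refine actLin_db_unique k (arr_char_left b hbv hl1 q1 rfl ?_)
          rintro u rfl
          have h' := hcq.1
          simp only [srcP_inl, tgtP_inr, List.getLast_append_singleton] at h'
          exact h'.symm
        have e2 : actRlin s t Z k (.inr ⟨[b], hbv⟩)
            (db s t Z k (.inr ⟨toListP s t Z p2 ++ [b], hl2⟩)) = db s t Z k p2 := by
          refine actRlin_db_unique k (arr_char_right b hbv hl2 p2 rfl ?_)
          rintro u rfl
          have h' := hcp.1
          simp only [tgtP_inl, srcP_inr, List.head_cons] at h'
          exact h'
        have hb := hbal₂ (.inr ⟨[b], hbv⟩)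
          (db s t Z k (.inr ⟨b :: toListP s t Z q1, hl1⟩))
          (db s t Z k (.inr ⟨toListP s t Z p2 ++ [b], hl2⟩))
        rw [e1, e2] at hb
        exact hb.symm
    intro p q h
    induction h with
    | rel _ _ h => exact step _ _ h
    | refl => rfl
    | symm _ _ _ ih => exact ih.symm
    | trans _ _ _ _ _ ih1 ih2 => exact ih1.trans ih2
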